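/- Let l be a prime, G a finite group, and suppose there are chains of subgroups G_1^{(1)} ⊲ ⋯ ⊲ G_r^{(1)} = G and G_1^{(2)} ⊲ ⋯ ⊲ G_s^{(2)} = G, each subgroup normal in the next with index coprime to l, where G_1^{(1)} and G_1^{(2)} are products of nonabelian finite simple groups each of order divisible by l. Then G_1^{(1)} = G_1^{(2)}. -/

import Mathlib

open Subgroup
open scoped commutatorElement

-- Key: nontrivial quotients of a product of nonabelian finite simple groups
-- kill no factor fully, i.e. a proper normal subgroup misses some factor.
lemma keyA {ι : Type*} [Finite ι] [DecidableEq ι] (K : ι → Type*) [∀ i, Group (K i)]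
    (hsimple : ∀ i, IsSimpleGroup (K i))
    (hnonab : ∀ i, ∃ a b : K i, a * b ≠ b * a)
    (N : Subgroup (∀ i, K i)) [hN : N.Normal] (hNt : N ≠ ⊤) :
    ∃ i, ∀ n ∈ N, n i = 1 := by
  by_contra h
  push_neg at h
  apply hNt
  have hsurj : ∀ i, Function.Surjective (Pi.evalMonoidHom K i) := by
    intro i a
    exact ⟨Pi.mulSingle i a, Pi.mulSingle_eq_same i a⟩
  have hmap : ∀ i, N.map (Pi.evalMonoidHom K i) = ⊤ := by
    intro i
    have : (N.map (Pi.evalMonoidHom K i)).Normal := hN.map _ (hsurj i)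
    rcases this.eq_bot_or_eq_top with hb | ht
    · obtain ⟨n, hnN, hni⟩ := h i
      exact absurd (hb ▸ Subgroup.mem_map_of_mem _ hnN) (by simpa using hni)
    · exact ht
  have hsingle : ∀ i (k : K i), Pi.mulSingle i k ∈ N := by
    intro i
    have hT : commutator (K i) ≤ N.comap (MonoidHom.mulSingle K i) := by
      rw [commutator_def, Subgroup.commutator_le]
      intro a _ b _
      have ha : ∃ n ∈ N, n i = a := by
        have := (hmap i) ▸ Subgroup.mem_top a
        simpa [Subgroup.mem_map] using this
      obtain ⟨n, hnN, hni⟩ := ha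
      have hcomm : ⁅n, Pi.mulSingle i b⁆ ∈ N := by
        have : n * ((Pi.mulSingle i b) * n⁻¹ * (Pi.mulSingle i b)⁻¹) ∈ N :=
          N.mul_mem hnN (hN.conj_mem _ (N.inv_mem hnN) _)
        simpa [commutatorElement_def, mul_assoc] using this
      have heq : ⁅n, Pi.mulSingle i b⁆ = Pi.mulSingle i ⁅a, b⁆ := by
        funext j
        rcases eq_or_ne j i with rfl | hj
        · simp [commutatorElement_def, hni]
        · simp [commutatorElement_def, Pi.mulSingle_eq_of_ne hj]
      have h' : Pi.mulSingle i ⁅a, b⁆ ∈ N := heq ▸ hcomm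
      exact h'
    have hct : commutator (K i) = ⊤ := by
      rcases (commutator_normal (⊤ : Subgroup (K i)) ⊤).eq_bot_or_eq_top with hb | ht
      · exfalso
        obtain ⟨a, b, hab⟩ := hnonab i
        apply hab
        have : ⁅a, b⁆ = 1 := by
          have := Subgroup.commutator_le.mp (le_of_eq hb) a (Subgroup.mem_top a) b (Subgroup.mem_top b)
          simpa using this
        rw [commutatorElement_eq_one_iff_mul_comm] at this
        exact this
      · exact ht
    intro k
    have : k ∈ N.comap (MonoidHom.mulSingle K i) := hT (hct ▸ Subgroup.mem_top k)
    simpa using this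
  rw [eq_top_iff]
  intro x _
  exact Subgroup.pi_mem_of_mulSingle_mem x fun i => hsingle i (x i)

-- any hom from a product of nonabelian simple groups (each of order divisible by l)
-- to a group of order coprime to l is trivial
lemma keyB (l : ℕ) (hl : l.Prime) {ι : Type*} [Finite ι] [DecidableEq ι]
    (K : ι → Type*) [∀ i, Group (K i)] [∀ i, Finite (K i)]
    (hsimple : ∀ i, IsSimpleGroup (K i))
    (hnonab : ∀ i, ∃ a b : K i, a * b ≠ b * a)
    (hdvd : ∀ i, l ∣ Nat.card (K i))
    {Q : Type*} [Group Q] [Finite Q] (hQ : Nat.Coprime (Nat.card Q) l)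
    (f : (∀ i, K i) →* Q) : ∀ x, f x = 1 := by
  intro x
  set N := f.ker with hN
  by_cases hNt : N = ⊤
  · have : x ∈ N := hNt ▸ Subgroup.mem_top x
    exact this
  · exfalso
    obtain ⟨i, hi⟩ := keyA K hsimple hnonab N hNt
    -- N ≤ ker of eval i, so K i is a quotient of (∀ i, K i) ⧸ N
    have hle : N ≤ (Pi.evalMonoidHom K i).ker := fun n hn => hi n hn
    have hsurj : Function.Surjective
        (QuotientGroup.lift N (Pi.evalMonoidHom K i) hle) := by
      intro a
      exact ⟨QuotientGroup.mk (Pi.mulSingle i a), by simp⟩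
    have hdvd1 : Nat.card (K i) ∣ Nat.card ((∀ j, K j) ⧸ N) :=
      card_dvd_of_surjective _ hsurj
    have hdvd2 : l ∣ N.index := by
      have : N.index = Nat.card ((∀ j, K j) ⧸ N) := rfl
      rw [this]
      exact (hdvd i).trans hdvd1
    have hdvd3 : l ∣ Nat.card Q := by
      have h1 : N.index = Nat.card f.range := Subgroup.index_ker f
      have h2 : Nat.card f.range ∣ Nat.card Q := Subgroup.card_subgroup_dvd_card f.range
      exact (h1 ▸ hdvd2).trans h2
    have : l ∣ 1 := hQ ▸ Nat.dvd_gcd hdvd3 dvd_rfl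
    exact hl.one_lt.ne' (Nat.dvd_one.mp this)

lemma keyC (l : ℕ) (hl : l.Prime) {G : Type*} [Group G] [Finite G]
    (A : Subgroup G) {ι : Type*} [Finite ι] [DecidableEq ι]
    (K : ι → Type*) [∀ i, Group (K i)] [∀ i, Finite (K i)]
    (hsimple : ∀ i, IsSimpleGroup (K i))
    (hnonab : ∀ i, ∃ a b : K i, a * b ≠ b * a)
    (hdvd : ∀ i, l ∣ Nat.card (K i))
    (e : A ≃* ∀ i, K i)
    (s : ℕ) (hs : 0 < s) (H : ℕ → Subgroup G) (htop : H (s - 1) = ⊤)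
    (hmono : ∀ i, i + 1 < s → H i ≤ H (i + 1))
    (hnorm : ∀ i, i + 1 < s → ((H i).subgroupOf (H (i + 1))).Normal)
    (hcop : ∀ i, i + 1 < s → Nat.Coprime ((H i).subgroupOf (H (i + 1))).index l) :
    A ≤ H 0 := by
  have key : ∀ j, j < s → A ≤ H (s - 1 - j) := by
    intro j
    induction j with
    | zero => intro _; simpa [htop] using le_top
    | succ j ih =>
      intro hj
      have prev : A ≤ H (s - 1 - j) := ih (by omega)
      set i := s - 1 - (j + 1) with hi
      have hieq : i + 1 = s - 1 - j := by omega
      have hi1 : i + 1 < s := by omega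
      have prev' : A ≤ H (i + 1) := by rw [hieq]; exact prev
      haveI := hnorm i hi1
      set f : (∀ k, K k) →* (H (i + 1) ⧸ (H i).subgroupOf (H (i + 1))) :=
        ((QuotientGroup.mk' ((H i).subgroupOf (H (i + 1)))).comp
          ((Subgroup.inclusion prev').comp e.symm.toMonoidHom)) with hf
      have htriv := keyB l hl K hsimple hnonab hdvd (hcop i hi1) f
      intro a ha
      have h1 := htriv (e ⟨a, ha⟩)
      rw [hf] at h1
      simp only [MonoidHom.comp_apply, MulEquiv.coe_toMonoidHom,
        MulEquiv.symm_apply_apply] at h1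
      rw [QuotientGroup.mk'_apply, QuotientGroup.eq_one_iff] at h1
      exact h1
  have := key (s - 1) (by omega)
  simpa using this

theorem stmt8 (l : ℕ) (hl : l.Prime) {G : Type*} [Group G] [Finite G]
    (r s : ℕ) (hr : 0 < r) (hs : 0 < s)
    (H1 H2 : ℕ → Subgroup G)
    (htop1 : H1 (r - 1) = ⊤) (htop2 : H2 (s - 1) = ⊤)
    (hmono1 : ∀ i, i + 1 < r → H1 i ≤ H1 (i + 1))
    (hnorm1 : ∀ i, i + 1 < r → ((H1 i).subgroupOf (H1 (i + 1))).Normal)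
    (hcop1 : ∀ i, i + 1 < r → Nat.Coprime ((H1 i).subgroupOf (H1 (i + 1))).index l)
    (hmono2 : ∀ i, i + 1 < s → H2 i ≤ H2 (i + 1))
    (hnorm2 : ∀ i, i + 1 < s → ((H2 i).subgroupOf (H2 (i + 1))).Normal)
    (hcop2 : ∀ i, i + 1 < s → Nat.Coprime ((H2 i).subgroupOf (H2 (i + 1))).index l)
    (m1 : ℕ) (K1 : Fin m1 → Type*) [∀ i, Group (K1 i)] [∀ i, Finite (K1 i)]
    (hsimple1 : ∀ i, IsSimpleGroup (K1 i))
    (hnonab1 : ∀ i, ∃ a b : K1 i, a * b ≠ b * a)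
    (hdvd1 : ∀ i, l ∣ Nat.card (K1 i))
    (e1 : H1 0 ≃* ∀ i, K1 i)
    (m2 : ℕ) (K2 : Fin m2 → Type*) [∀ i, Group (K2 i)] [∀ i, Finite (K2 i)]
    (hsimple2 : ∀ i, IsSimpleGroup (K2 i))
    (hnonab2 : ∀ i, ∃ a b : K2 i, a * b ≠ b * a)
    (hdvd2 : ∀ i, l ∣ Nat.card (K2 i))
    (e2 : H2 0 ≃* ∀ i, K2 i) :
    H1 0 = H2 0 :=
  le_antisymm
    (keyC l hl (H1 0) K1 hsimple1 hnonab1 hdvd1 e1 s hs H2 htop2 hmono2 hnorm2 hcop2)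
    (keyC l hl (H2 0) K2 hsimple2 hnonab2 hdvd2 e2 r hr H1 htop1 hmono1 hnorm1 hcop1)
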